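/- For every Schwartz function ψ : ℝ → ℂ with ∫_ℝ |ψ(x)|² dx = 1, the Wigner distribution is normalized: ∫_ℝ ∫_ℝ W_ψ(x,p) dx dp = 1. -/

import Mathlib

open MeasureTheory

/-- The Wigner distribution of a wavefunction `ψ : ℝ → ℂ`, with Planck constant `hbar`:
`W_ψ(x,p) = (1/(2π hbar)) ∫ conj(ψ(x + x'/2)) ψ(x - x'/2) exp(i p x'/hbar) dx'`. -/
noncomputable def wigner (hbar : ℝ) (ψ : ℝ → ℂ) (x p : ℝ) : ℂ :=
  ((1 / (2 * Real.pi * hbar) : ℝ) : ℂ) *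
    ∫ x' : ℝ, (starRingEnd ℂ) (ψ (x + x' / 2)) * ψ (x - x' / 2) *
      Complex.exp (Complex.I * (p : ℂ) * (x' : ℂ) / (hbar : ℂ))

open Complex FourierTransform Filter in
private lemma fourier_conj_eq (φ : SchwartzMap ℝ ℂ) (x : ℝ) :
    𝓕 (fun w => (starRingEnd ℂ) (φ w)) x
      = (starRingEnd ℂ) (𝓕⁻ (⇑φ) x) := by
  rw [Real.fourier_eq', Real.fourierInv_eq', ← integral_conj]
  refine integral_congr_ae (Eventually.of_forall fun v => ?_)
  simp only [smul_eq_mul, map_mul, ← Complex.exp_conj, Complex.conj_ofReal, Complex.conj_I]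
  rw [show ((2 * Real.pi * (inner ℝ v x : ℝ) : ℝ) : ℂ) * (-Complex.I)
      = ((-2 * Real.pi * (inner ℝ v x : ℝ) : ℝ) : ℂ) * Complex.I by push_cast; ring]

open Complex FourierTransform Filter in
private lemma parseval_schwartz (ψ : SchwartzMap ℝ ℂ) :
    ∫ w : ℝ, ‖𝓕 (⇑ψ) w‖ ^ 2 = ∫ x : ℝ, ‖ψ x‖ ^ 2 := by
  set φ := SchwartzMap.fourierTransformCLM ℂ ψ with hφdef
  have hφ : ⇑φ = 𝓕 (⇑ψ) := rfl
  set g : ℝ → ℂ := fun w => (starRingEnd ℂ) (φ w) with hg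
  have hgi : Integrable g := by
    refine φ.integrable.mono ?_ (Eventually.of_forall fun w => by simp [hg])
    exact (continuous_star.comp φ.continuous).aestronglyMeasurable
  have hinv : ∀ x : ℝ, 𝓕 g x = (starRingEnd ℂ) (ψ x) := by
    intro x
    rw [fourier_conj_eq φ x, hφ,
      (ψ.integrable (μ := volume)).fourierInv_fourier_eq (by rw [← hφ]; exact φ.integrable)
        ψ.continuous.continuousAt]
  have hLcont : Continuous fun q : ℝ × ℝ => (innerₗ ℝ) q.1 q.2 := by
    simpa [innerₗ_apply_apply] using (continuous_inner : Continuous fun q : ℝ × ℝ => (inner ℝ q.1 q.2 : ℝ))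
  have flip := VectorFourier.integral_fourierIntegral_smul_eq_flip
    (e := Real.fourierChar) (L := innerₗ ℝ) (μ := volume) (ν := volume)
    Real.continuous_fourierChar hLcont ψ.integrable hgi
  have hflipL : (innerₗ ℝ).flip = innerₗ ℝ := by
    apply LinearMap.ext; intro x; apply LinearMap.ext; intro y
    simpa [innerₗ_apply_apply] using mul_comm (x : ℝ) y
  rw [hflipL] at flip
  have lhs : (∫ ξ : ℝ, (VectorFourier.fourierIntegral Real.fourierChar volume (innerₗ ℝ) (⇑ψ) ξ) • g ξ)
      = ((∫ w : ℝ, ‖𝓕 (⇑ψ) w‖ ^ 2 : ℝ) : ℂ) := by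
    have hpt : ∀ ξ : ℝ, (VectorFourier.fourierIntegral Real.fourierChar volume (innerₗ ℝ) (⇑ψ) ξ) • g ξ
        = ((‖𝓕 (⇑ψ) ξ‖ ^ 2 : ℝ) : ℂ) := by
      intro ξ
      have h1 : VectorFourier.fourierIntegral Real.fourierChar volume (innerₗ ℝ) (⇑ψ) ξ
          = φ ξ := rfl
      rw [h1, smul_eq_mul, hg]
      dsimp only
      rw [RCLike.mul_conj, hφ]
      norm_cast
    calc (∫ ξ : ℝ, (VectorFourier.fourierIntegral Real.fourierChar volume (innerₗ ℝ) (⇑ψ) ξ) • g ξ)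
        = ∫ ξ : ℝ, ((‖𝓕 (⇑ψ) ξ‖ ^ 2 : ℝ) : ℂ) :=
          integral_congr_ae (Eventually.of_forall hpt)
      _ = ((∫ w : ℝ, ‖𝓕 (⇑ψ) w‖ ^ 2 : ℝ) : ℂ) :=
          integral_ofReal (𝕜 := ℂ) (f := fun w : ℝ => ‖𝓕 (⇑ψ) w‖ ^ 2)
  have rhs : (∫ x : ℝ, ψ x • VectorFourier.fourierIntegral Real.fourierChar volume (innerₗ ℝ) g x)
      = ((∫ x : ℝ, ‖ψ x‖ ^ 2 : ℝ) : ℂ) := by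
    have hpt : ∀ x : ℝ, ψ x • VectorFourier.fourierIntegral Real.fourierChar volume (innerₗ ℝ) g x
        = ((‖ψ x‖ ^ 2 : ℝ) : ℂ) := by
      intro x
      have h1 : VectorFourier.fourierIntegral Real.fourierChar volume (innerₗ ℝ) g x
          = 𝓕 g x := rfl
      rw [h1, hinv x, smul_eq_mul, RCLike.mul_conj]
      norm_cast
    calc (∫ x : ℝ, ψ x • VectorFourier.fourierIntegral Real.fourierChar volume (innerₗ ℝ) g x)
        = ∫ x : ℝ, ((‖ψ x‖ ^ 2 : ℝ) : ℂ) := integral_congr_ae (Eventually.of_forall hpt)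
      _ = ((∫ x : ℝ, ‖ψ x‖ ^ 2 : ℝ) : ℂ) :=
          integral_ofReal (𝕜 := ℂ) (f := fun x : ℝ => ‖ψ x‖ ^ 2)
  have hfin := flip
  rw [lhs, rhs] at hfin
  exact_mod_cast hfin

/-- For a normalized state, the Wigner distribution is normalized:
`∫∫ W_ψ(x,p) dx dp = 1`. -/
theorem wigner_normalized (hbar : ℝ) (hhbar : 0 < hbar) (ψ : SchwartzMap ℝ ℂ)
    (hnorm : ∫ x : ℝ, ‖ψ x‖ ^ 2 = 1) :
    (∫ p : ℝ, ∫ x : ℝ, wigner hbar (⇑ψ) x p) = 1 := by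
  have hπ : (0 : ℝ) < 2 * Real.pi * hbar := by positivity
  have key : ∀ p : ℝ, (∫ x : ℝ, wigner hbar (⇑ψ) x p)
      = ((1 / (2 * Real.pi * hbar) : ℝ) : ℂ) *
        ((‖FourierTransform.fourier (⇑ψ) (p / (2 * Real.pi * hbar))‖ ^ 2 : ℝ) : ℂ) := by
    intro p
    set Φ : ℝ → ℝ → ℂ := fun x t =>
      (starRingEnd ℂ) (ψ (2*x - t)) * ψ t *
        Complex.exp (((p * (2*x - 2*t) / hbar : ℝ) : ℂ) * Complex.I) with hΦ
    set G : ℂ := ∫ t : ℝ, ψ t * Complex.exp (((-(p * t / hbar) : ℝ) : ℂ) * Complex.I) with hGdef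
    -- step 1: rewrite the inner x' integral
    have h1 : ∀ x : ℝ, (∫ x' : ℝ, (starRingEnd ℂ) (ψ (x + x' / 2)) * ψ (x - x' / 2) *
        Complex.exp (Complex.I * (p : ℂ) * (x' : ℂ) / (hbar : ℂ))) = (2 : ℝ) • ∫ t : ℝ, Φ x t := by
      intro x
      have e1 : ∀ x' : ℝ, (starRingEnd ℂ) (ψ (x + x' / 2)) * ψ (x - x' / 2) *
          Complex.exp (Complex.I * (p : ℂ) * (x' : ℂ) / (hbar : ℂ)) = Φ x (x - x' / 2) := by
        intro x'
        rw [hΦ]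
        simp only
        rw [show 2*x - (x - x'/2) = x + x'/2 by ring,
          show 2*x - 2*(x - x'/2) = x' by ring]
        congr 1
        push_cast
        ring
      calc (∫ x' : ℝ, (starRingEnd ℂ) (ψ (x + x' / 2)) * ψ (x - x' / 2) *
              Complex.exp (Complex.I * (p : ℂ) * (x' : ℂ) / (hbar : ℂ)))
          = ∫ x' : ℝ, Φ x (x - x' / 2) := by simp_rw [e1]
        _ = |(2:ℝ)| • ∫ y : ℝ, Φ x (x - y) :=
            Measure.integral_comp_div (fun y => Φ x (x - y)) 2
        _ = (2:ℝ) • ∫ t : ℝ, Φ x t := by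
            rw [abs_two]
            congr 1
            simp_rw [sub_eq_add_neg]
            rw [integral_neg_eq_self (fun z => Φ x (x + z)) volume]
            exact integral_add_left_eq_self (fun t => Φ x t) x
    -- integrability on the product space
    have hψ2 : ∀ t : ℝ, Integrable (fun x : ℝ => ψ (2*x - t)) :=
      fun t => ((ψ.integrable).comp_sub_right t).comp_mul_left' two_ne_zero
    have hint : Integrable (Function.uncurry Φ) (volume.prod volume) := by
      have hcont : Continuous (Function.uncurry Φ) := by
        rw [hΦ]
        apply Continuous.mul
        apply Continuous.mul
        · exact continuous_star.comp (ψ.continuous.comp (by fun_prop))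
        · exact ψ.continuous.comp continuous_snd
        · exact Complex.continuous_exp.comp ((Complex.continuous_ofReal.comp (by fun_prop)).mul
            continuous_const)
      refine (integrable_prod_iff' hcont.aestronglyMeasurable).2
        ⟨Filter.Eventually.of_forall fun t => ?_, ?_⟩
      · -- integrable in x for fixed t
        have hb : Integrable (fun x : ℝ => (starRingEnd ℂ) (ψ (2*x - t))) := by
          refine (hψ2 t).mono ?_ (Filter.Eventually.of_forall fun x => by simp)
          exact (continuous_star.comp (ψ.continuous.comp (by fun_prop))).aestronglyMeasurable
        have hbm : Integrable (fun x : ℝ =>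
            (ψ t * Complex.exp (((p * (2*x - 2*t) / hbar : ℝ) : ℂ) * Complex.I)) *
              (starRingEnd ℂ) (ψ (2*x - t))) := by
          refine Integrable.bdd_mul (c := ‖ψ t‖) hb ?_ (Filter.Eventually.of_forall fun x => ?_)
          · exact (continuous_const.mul (Complex.continuous_exp.comp
              ((Complex.continuous_ofReal.comp (by fun_prop)).mul
                continuous_const))).aestronglyMeasurable
          · rw [norm_mul, Complex.norm_exp_ofReal_mul_I, mul_one]
        exact hbm.congr (Filter.Eventually.of_forall fun x => by
          simp only [Function.uncurry, hΦ]; ring)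
      · -- integrable norm integral in t
        have heq : ∀ t : ℝ, (∫ x : ℝ, ‖Function.uncurry Φ (x, t)‖)
            = (2⁻¹ * ∫ u : ℝ, ‖ψ u‖) * ‖ψ t‖ := by
          intro t
          have hpt : ∀ x : ℝ, ‖Function.uncurry Φ (x, t)‖ = ‖ψ (2*x - t)‖ * ‖ψ t‖ := by
            intro x
            simp only [Function.uncurry, hΦ]
            rw [norm_mul, norm_mul, Complex.norm_exp_ofReal_mul_I, mul_one, RCLike.norm_conj]
          simp_rw [hpt]
          rw [integral_mul_const]
          congr 1
          rw [Measure.integral_comp_mul_left (fun y : ℝ => ‖ψ (y - t)‖) 2,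
            integral_sub_right_eq_self (fun u : ℝ => ‖ψ u‖) t]
          simp [smul_eq_mul]
        exact ((ψ.integrable.norm.const_mul (2⁻¹ * ∫ u : ℝ, ‖ψ u‖)).congr
          (Filter.Eventually.of_forall fun t => (heq t).symm))
    -- inner x-integral after swapping
    have hinner : ∀ t : ℝ, (∫ x : ℝ, Φ x t) = (2⁻¹ : ℝ) •
        ((∫ s : ℝ, (starRingEnd ℂ) (ψ s) * Complex.exp (((p * s / hbar : ℝ) : ℂ) * Complex.I)) *
          (ψ t * Complex.exp (((-(p * t / hbar) : ℝ) : ℂ) * Complex.I))) := by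
      intro t
      have e1 : ∀ x : ℝ, Φ x t = (fun s : ℝ => (starRingEnd ℂ) (ψ s) * ψ t *
          Complex.exp (((p * (s - t) / hbar : ℝ) : ℂ) * Complex.I)) (2*x - t) := by
        intro x
        simp only [hΦ]
        rw [show 2*x - t - t = 2*x - 2*t by ring]
      simp_rw [e1]
      rw [Measure.integral_comp_mul_left (fun y : ℝ => (fun s : ℝ => (starRingEnd ℂ) (ψ s) * ψ t *
          Complex.exp (((p * (s - t) / hbar : ℝ) : ℂ) * Complex.I)) (y - t)) 2]
      simp only
      rw [integral_sub_right_eq_self (fun s : ℝ => (starRingEnd ℂ) (ψ s) * ψ t *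
          Complex.exp (((p * (s - t) / hbar : ℝ) : ℂ) * Complex.I)) t]
      have e2 : ∀ s : ℝ, (starRingEnd ℂ) (ψ s) * ψ t *
          Complex.exp (((p * (s - t) / hbar : ℝ) : ℂ) * Complex.I)
          = ((starRingEnd ℂ) (ψ s) * Complex.exp (((p * s / hbar : ℝ) : ℂ) * Complex.I)) *
            (ψ t * Complex.exp (((-(p * t / hbar) : ℝ) : ℂ) * Complex.I)) := by
        intro s
        rw [show ((p * (s - t) / hbar : ℝ) : ℂ)
            = ((p * s / hbar : ℝ) : ℂ) + ((-(p * t / hbar) : ℝ) : ℂ) by push_cast; ring,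
          add_mul, Complex.exp_add]
        ring
      simp_rw [e2]
      rw [integral_mul_const]
      congr 1
      norm_num
    -- the conjugate factor
    have hCp : (∫ s : ℝ, (starRingEnd ℂ) (ψ s) *
        Complex.exp (((p * s / hbar : ℝ) : ℂ) * Complex.I)) = (starRingEnd ℂ) G := by
      rw [hGdef, ← integral_conj]
      refine integral_congr_ae (Filter.Eventually.of_forall fun s => ?_)
      dsimp only
      rw [map_mul, ← Complex.exp_conj, map_mul, Complex.conj_ofReal, Complex.conj_I,
        show ((-(p * s / hbar) : ℝ) : ℂ) * (-Complex.I)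
          = ((p * s / hbar : ℝ) : ℂ) * Complex.I by push_cast; ring]
    -- identification with the Fourier transform
    have hGF : G = FourierTransform.fourier (⇑ψ) (p / (2 * Real.pi * hbar)) := by
      rw [hGdef, Real.fourier_eq']
      refine integral_congr_ae (Filter.Eventually.of_forall fun v => ?_)
      dsimp only
      rw [smul_eq_mul, mul_comm]
      congr 2
      have hin : (inner ℝ v (p / (2 * Real.pi * hbar)) : ℝ) = v * (p / (2 * Real.pi * hbar)) := by simp [mul_comm]
      rw [hin]
      congr 1
      rw [Complex.ofReal_inj]
      field_simp
    -- assemble the inner double integral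
    simp only [wigner]
    rw [integral_const_mul]
    congr 1
    calc (∫ x : ℝ, ∫ x' : ℝ, (starRingEnd ℂ) (ψ (x + x' / 2)) * ψ (x - x' / 2) *
            Complex.exp (Complex.I * (p : ℂ) * (x' : ℂ) / (hbar : ℂ)))
        = ∫ x : ℝ, (2:ℝ) • ∫ t : ℝ, Φ x t := by simp_rw [h1]
      _ = (2:ℝ) • ∫ x : ℝ, ∫ t : ℝ, Φ x t := integral_smul _ _
      _ = (2:ℝ) • ∫ t : ℝ, ∫ x : ℝ, Φ x t := by rw [integral_integral_swap hint]
      _ = (2:ℝ) • ∫ t : ℝ, (2⁻¹ : ℝ) •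
            ((∫ s : ℝ, (starRingEnd ℂ) (ψ s) *
              Complex.exp (((p * s / hbar : ℝ) : ℂ) * Complex.I)) *
              (ψ t * Complex.exp (((-(p * t / hbar) : ℝ) : ℂ) * Complex.I))) := by
          simp_rw [hinner]
      _ = (2:ℝ) • (2⁻¹ : ℝ) • ((∫ s : ℝ, (starRingEnd ℂ) (ψ s) *
              Complex.exp (((p * s / hbar : ℝ) : ℂ) * Complex.I)) *
            ∫ t : ℝ, ψ t * Complex.exp (((-(p * t / hbar) : ℝ) : ℂ) * Complex.I)) := by
          rw [integral_smul, integral_const_mul]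
      _ = (starRingEnd ℂ) G * G := by
          rw [hCp, ← hGdef, smul_smul]
          norm_num
      _ = ((‖FourierTransform.fourier (⇑ψ) (p / (2 * Real.pi * hbar))‖ ^ 2 : ℝ) : ℂ) := by
          rw [RCLike.conj_mul, hGF]
          norm_cast
  calc (∫ p : ℝ, ∫ x : ℝ, wigner hbar (⇑ψ) x p)
      = ∫ p : ℝ, ((1 / (2 * Real.pi * hbar) : ℝ) : ℂ) *
          ((‖FourierTransform.fourier (⇑ψ) (p / (2 * Real.pi * hbar))‖ ^ 2 : ℝ) : ℂ) := by
        exact integral_congr_ae (Filter.Eventually.of_forall key)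
    _ = ((1 / (2 * Real.pi * hbar) : ℝ) : ℂ) *
          ∫ p : ℝ, ((‖FourierTransform.fourier (⇑ψ) (p / (2 * Real.pi * hbar))‖ ^ 2 : ℝ) : ℂ) :=
        integral_const_mul _ _
    _ = ((1 / (2 * Real.pi * hbar) : ℝ) : ℂ) *
          ((∫ p : ℝ, ‖FourierTransform.fourier (⇑ψ) (p / (2 * Real.pi * hbar))‖ ^ 2 : ℝ) : ℂ) := by
        congr 1
        exact integral_ofReal
    _ = ((1 / (2 * Real.pi * hbar) : ℝ) : ℂ) *
          ((|2 * Real.pi * hbar| • ∫ w : ℝ, ‖FourierTransform.fourier (⇑ψ) w‖ ^ 2 : ℝ) : ℂ) := by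
        rw [Measure.integral_comp_div (fun w : ℝ => ‖FourierTransform.fourier (⇑ψ) w‖ ^ 2)
          (2 * Real.pi * hbar)]
    _ = 1 := by
        rw [parseval_schwartz ψ, hnorm, abs_of_pos hπ, smul_eq_mul, mul_one]
        push_cast
        rw [one_div, inv_mul_cancel₀]
        simp [Real.pi_ne_zero, hhbar.ne']
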